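/- Let Σ be a positive definite p×p real matrix, let S be positive semidefinite, and let q ∈ ℝ^p be a nonzero vector with Sq = 0. For t > 0 define Σ_t = Σ − (1/t + qᵀΣq)^{-1} Σ q qᵀ Σ. Then ℓ(Σ_t|S) = ℓ(Σ|S) + log(1 + t qᵀΣq) for all t > 0, and consequently ℓ(Σ_t|S) → ∞ as t → ∞. -/

import Mathlib

open Matrix MeasureTheory Filter

noncomputable section

/-- Matrices `Λ` supported on the directed edge set `D` with `I - Λ` invertible. -/
def RDreg {ι : Type*} [Fintype ι] [DecidableEq ι] (D : Set (ι × ι)) :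
    Set (Matrix ι ι ℝ) :=
  {Λ | (∀ i j, (i, j) ∉ D → Λ i j = 0) ∧ IsUnit (1 - Λ)}

/-- Positive definite matrices with off-diagonal support over the bidirected edges `B`. -/
def PDB {ι : Type*} [Fintype ι] [DecidableEq ι] (B : SimpleGraph ι) :
    Set (Matrix ι ι ℝ) :=
  {Ω | Ω.PosDef ∧ ∀ i j, i ≠ j → ¬ B.Adj i j → Ω i j = 0}

/-- The covariance matrices of the linear structural equation model of the mixed graph
`G = (V, D, B)`:  `PD(G) = {(I-Λ)⁻ᵀ Ω (I-Λ)⁻¹}`. -/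
def PDG {ι : Type*} [Fintype ι] [DecidableEq ι] (D : Set (ι × ι)) (B : SimpleGraph ι) :
    Set (Matrix ι ι ℝ) :=
  {S | ∃ Λ ∈ RDreg D, ∃ Ω ∈ PDB B, S = ((1 - Λ)⁻¹)ᵀ * Ω * (1 - Λ)⁻¹}

/-- Gaussian log-likelihood `ℓ(Σ | S) = - log det Σ - trace (Σ⁻¹ S)`. -/
def loglik {ι : Type*} [Fintype ι] [DecidableEq ι] (Sig S : Matrix ι ι ℝ) : ℝ :=
  -Real.log Sig.det - (Sig⁻¹ * S).trace

/-- A set of nodes together with all parents of its elements. -/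
def Pa {ι : Type*} (D : Set (ι × ι)) (C : Set ι) : Set ι :=
  C ∪ {k | ∃ i ∈ C, (k, i) ∈ D}

lemma vecMulVec_mul_vecMulVec' {p : ℕ} (a b u v : Fin p → ℝ) :
    vecMulVec a b * vecMulVec u v = (b ⬝ᵥ u) • vecMulVec a v := by
  ext i j
  simp only [Matrix.mul_apply, vecMulVec_apply, Matrix.smul_apply, smul_eq_mul, dotProduct,
    Finset.sum_mul]
  exact Finset.sum_congr rfl fun k _ => by ring

lemma mul_vecMulVec' {p : ℕ} (M : Matrix (Fin p) (Fin p) ℝ) (a b : Fin p → ℝ) :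
    M * vecMulVec a b = vecMulVec (M.mulVec a) b := by
  ext i j
  simp only [Matrix.mul_apply, vecMulVec_apply, mulVec, dotProduct, Finset.sum_mul]
  exact Finset.sum_congr rfl fun k _ => by ring

lemma vecMulVec_mul' {p : ℕ} (M : Matrix (Fin p) (Fin p) ℝ) (a b : Fin p → ℝ) :
    vecMulVec a b * M = vecMulVec a (M.vecMul b) := by
  ext i j
  simp only [Matrix.mul_apply, vecMulVec_apply, vecMul, dotProduct, Finset.mul_sum]
  exact Finset.sum_congr rfl fun k _ => by ring

lemma smul_vecMulVec' {p : ℕ} (t : ℝ) (a b : Fin p → ℝ) :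
    t • vecMulVec a b = vecMulVec (t • a) b := by
  ext i j; simp [vecMulVec_apply, mul_assoc]

/-- For positive definite `Σ`, positive semidefinite `S` and a nonzero vector `q` with
`Sq = 0`, the matrices `Σ_t = Σ − (1/t + qᵀΣq)⁻¹ Σ q qᵀ Σ` satisfy
`ℓ(Σ_t | S) = ℓ(Σ | S) + log(1 + t qᵀΣq)`, which tends to `∞` as `t → ∞`. -/
theorem loglik_rank_one_update (p : ℕ) (Sig S : Matrix (Fin p) (Fin p) ℝ)
    (hSig : Sig.PosDef) (hS : S.PosSemidef) (q : Fin p → ℝ) (hq : q ≠ 0)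
    (hSq : S.mulVec q = 0) :
    (∀ t : ℝ, 0 < t →
      loglik (Sig - (1 / t + q ⬝ᵥ Sig.mulVec q)⁻¹ • (Sig * vecMulVec q q * Sig)) S =
        loglik Sig S + Real.log (1 + t * (q ⬝ᵥ Sig.mulVec q))) ∧
    Tendsto (fun t : ℝ =>
        loglik (Sig - (1 / t + q ⬝ᵥ Sig.mulVec q)⁻¹ • (Sig * vecMulVec q q * Sig)) S)
      atTop atTop := by
  set c : ℝ := q ⬝ᵥ Sig.mulVec q with hcdef
  have hc : 0 < c := by simpa using hSig.dotProduct_mulVec_pos hq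
  have hdet : Sig.det ≠ 0 := hSig.det_pos.ne'
  have hdu : IsUnit Sig.det := isUnit_iff_ne_zero.mpr hdet
  have hSS : Sig * Sig⁻¹ = 1 := Matrix.mul_nonsing_inv Sig hdu
  set Q : Matrix (Fin p) (Fin p) ℝ := vecMulVec q q with hQdef
  have hQSQ : Q * Sig * Q = c • Q := by
    rw [hQdef, vecMulVec_mul', vecMulVec_mul_vecMulVec']
    congr 1
    rw [hcdef, dotProduct_mulVec]
  have htr : (Q * S).trace = 0 := by
    rw [hQdef, vecMulVec_mul']
    have h1 : (vecMulVec q (S.vecMul q)).trace = q ⬝ᵥ S.vecMul q := by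
      simp [Matrix.trace, Matrix.diag, vecMulVec_apply, dotProduct]
    have hsymm : Sᵀ = S := hS.1.eq
    rw [h1, ← Matrix.mulVec_transpose, hsymm, hSq, dotProduct_zero]
  have key : ∀ t : ℝ, 0 < t →
      loglik (Sig - (1 / t + c)⁻¹ • (Sig * Q * Sig)) S =
        loglik Sig S + Real.log (1 + t * c) := by
    intro t ht
    have hd : 0 < 1 + t * c := by positivity
    set α : ℝ := (1 / t + c)⁻¹ with hαdef
    have hpos : 0 < 1 / t + c := by positivity
    have hαmul : α * (1 + t * c) = t := by
      have h0 : 1 / t + c = (1 + t * c) / t := by field_simp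
      rw [hαdef, h0, inv_div, div_mul_cancel₀ t hd.ne']
    have hs : α + α * t * c = t := by nlinarith [hαmul]
    have e1 : Sig * Q * Sig * Sig⁻¹ = Sig * Q := by
      rw [mul_assoc (Sig * Q) Sig Sig⁻¹, hSS, mul_one]
    have e2 : Sig * Q * Sig * Q = c • (Sig * Q) := by
      rw [mul_assoc, mul_assoc, ← mul_assoc Q Sig Q, hQSQ, mul_smul_comm]
    have hTinv : (Sig - α • (Sig * Q * Sig)) * (Sig⁻¹ + t • Q) = 1 := by
      rw [sub_mul, mul_add, mul_add, hSS, smul_mul_assoc, smul_mul_assoc, e1,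
        mul_smul_comm, mul_smul_comm, e2, smul_smul, smul_smul, ← add_smul]
      rw [show α + α * t * c = t from hs, add_sub_cancel_right]
    have hTinvEq : (Sig - α • (Sig * Q * Sig))⁻¹ = Sig⁻¹ + t • Q :=
      Matrix.inv_eq_right_inv hTinv
    have hdet2 : (Sig⁻¹ + t • Q).det = Sig.det⁻¹ * (1 + t * c) := by
      have hfact : Sig⁻¹ + t • Q = Sig⁻¹ * (1 + Sig * (t • Q)) := by
        rw [mul_add, mul_one, ← mul_assoc, Matrix.nonsing_inv_mul Sig hdu, one_mul]
      rw [hfact, det_mul, det_nonsing_inv, Ring.inverse_eq_inv']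
      congr 1
      rw [mul_smul_comm, hQdef, mul_vecMulVec', smul_vecMulVec',
        vecMulVec_eq (Fin 1), det_one_add_replicateCol_mul_replicateRow]
      simp [hcdef, dotProduct_smul, mul_comm]
    have hdetT : (Sig - α • (Sig * Q * Sig)).det = Sig.det * (1 + t * c)⁻¹ := by
      have h1 : (Sig - α • (Sig * Q * Sig)).det * (Sig⁻¹ + t • Q).det = 1 := by
        rw [← det_mul, hTinv, det_one]
      rw [hdet2] at h1
      field_simp at h1 ⊢
      linarith
    have hltr : ((Sig - α • (Sig * Q * Sig))⁻¹ * S).trace = (Sig⁻¹ * S).trace := by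
      rw [hTinvEq, add_mul, trace_add, smul_mul_assoc, trace_smul, htr]
      simp
    have hlog : Real.log (Sig - α • (Sig * Q * Sig)).det =
        Real.log Sig.det - Real.log (1 + t * c) := by
      rw [hdetT, Real.log_mul hdet (inv_ne_zero hd.ne'), Real.log_inv]
      ring
    unfold loglik
    rw [hltr, hlog]
    ring
  refine ⟨key, ?_⟩
  have h1 : Tendsto (fun t : ℝ => loglik Sig S + Real.log (1 + t * c)) atTop atTop := by
    apply tendsto_atTop_add_const_left
    exact Real.tendsto_log_atTop.comp
      (tendsto_atTop_add_const_left _ 1 (Tendsto.atTop_mul_const hc tendsto_id))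
  exact h1.congr' ((eventually_gt_atTop 0).mono fun t ht => (key t ht).symm)


end
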